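/- arXiv:1912.08865 — 3 statements merged into one kernel-verified Lean document; each statement's English description precedes it below -/
import Mathlib

section
/- Let H be a class of sign-activation neural network functions whose growth function satisfies τ_H(m) ≤ (em)^{|E|} for all m ≥ 1, where |E| ≥ 1 is the number of edges. Then the VC-dimension of H is at most (2|E|/log 2)·log(e|E|/log 2), hence O(|E| log |E|). -/
open Real

def restrictSet {X Y : Type*} (H : Set (X → Y)) (C : Finset X) : Set ({x // x ∈ C} → Y) :=
  {g | ∃ h ∈ H, ∀ c : {x // x ∈ C}, g c = h c}

noncomputable def growth {X Y : Type*} (H : Set (X → Y)) (m : ℕ) : ℕ :=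
  ⨆ C : {C : Finset X // C.card = m}, (restrictSet H C.1).ncard

/-- A class `H` shatters some set of size `m` iff its growth function at `m` is `2 ^ m`.
If the growth function of a (sign-activation neural network) class `H` is bounded by
`(e m) ^ |E|` for all `m ≥ 1`, then any shattered set has size at most
`(2 |E| / log 2) · log (e |E| / log 2)`; i.e. the VC-dimension is `O(|E| log |E|)`. -/
theorem vcDim_le_of_growth_le {X : Type*} (H : Set (X → Bool)) (E : ℕ) (hE : 1 ≤ E)
    (hgrowth : ∀ m : ℕ, 1 ≤ m → (growth H m : ℝ) ≤ (Real.exp 1 * m) ^ E) :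
    ∀ m : ℕ, growth H m = 2 ^ m →
      (m : ℝ) ≤ (2 * E / Real.log 2) * Real.log (Real.exp 1 * E / Real.log 2) := by
  have hlog2 : 0 < Real.log 2 := Real.log_pos (by norm_num)
  have hlog2' : Real.log 2 < 1 := by
    have := Real.log_two_lt_d9; linarith
  have hE0 : (0:ℝ) < E := by exact_mod_cast hE
  have he2 : (2:ℝ) ≤ Real.exp 1 := by
    have := Real.add_one_le_exp (1:ℝ); linarith
  have hL1 : (1:ℝ) ≤ Real.exp 1 * E / Real.log 2 := by
    rw [le_div_iff₀ hlog2]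
    have h21 : (2:ℝ) * 1 ≤ Real.exp 1 * E :=
      mul_le_mul he2 (by exact_mod_cast hE) (by norm_num) (by positivity)
    linarith
  have hLnn : 0 ≤ Real.log (Real.exp 1 * E / Real.log 2) := Real.log_nonneg hL1
  intro m hm
  rcases Nat.eq_zero_or_pos m with h0 | hm1
  · subst h0
    push_cast
    exact mul_nonneg (by positivity) hLnn
  · have hm0 : (0:ℝ) < m := by exact_mod_cast hm1
    have hpow : (2:ℝ) ^ m ≤ (Real.exp 1 * m) ^ E := by
      calc (2:ℝ) ^ m = (growth H m : ℝ) := by rw [hm]; push_cast; ring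
        _ ≤ _ := hgrowth m hm1
    have hlogpow : (m:ℝ) * Real.log 2 ≤ E * (1 + Real.log m) := by
      have h := Real.log_le_log (by positivity) hpow
      rw [Real.log_pow, Real.log_pow,
        Real.log_mul (Real.exp_ne_zero 1) hm0.ne', Real.log_exp] at h
      exact_mod_cast h
    set t := Real.log 2 / (2 * E) with ht_def
    have ht : 0 < t := by positivity
    have hlm : Real.log m ≤ t * m - 1 - Real.log t := by
      have h1 := Real.log_le_sub_one_of_pos (mul_pos ht hm0)
      rw [Real.log_mul ht.ne' hm0.ne'] at h1
      linarith
    have hEt : (E:ℝ) * t = Real.log 2 / 2 := by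
      rw [ht_def]; field_simp
    have hlt : Real.log t = - Real.log (2 * E / Real.log 2) := by
      rw [ht_def, ← Real.log_inv]; congr 1
      field_simp
    have h2 : (E:ℝ) * Real.log m ≤ E * (t * m - 1 - Real.log t) :=
      mul_le_mul_of_nonneg_left hlm hE0.le
    have h2' : (E:ℝ) * Real.log m ≤
        (Real.log 2 / 2) * m - E + E * Real.log (2 * E / Real.log 2) := by
      calc (E:ℝ) * Real.log m ≤ E * (t * m - 1 - Real.log t) := h2
        _ = (E * t) * m - E + E * (- Real.log t) := by ring
        _ = (Real.log 2 / 2) * m - E + E * Real.log (2 * E / Real.log 2) := by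
            rw [hEt, hlt]; ring
    have hu : Real.log (2 * E / Real.log 2) ≤ Real.log (Real.exp 1 * E / Real.log 2) := by
      apply Real.log_le_log (by positivity)
      gcongr
    have hu' : (E:ℝ) * Real.log (2 * E / Real.log 2)
        ≤ E * Real.log (Real.exp 1 * E / Real.log 2) :=
      mul_le_mul_of_nonneg_left hu hE0.le
    rw [div_mul_eq_mul_div, le_div_iff₀ hlog2]
    nlinarith [hlogpow, h2', hu']
end

section
/- Let H be the class of halfspace classifiers on R^1, h_{w,b}(x) = sign(wx + b) with (w,b) ∈ R^2, and let the adversary use neighborhoods N(x) = [x−ε, x+ε] for fixed ε ≥ 0. Then the corrupted class κ(H) can still shatter (via its loss class) a set of 2 points whenever the points are at distance greater than 2ε, so AVC(H, N) ≥ 2 = d + 1 with d = 1. -/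
open Classical

/-- Halfspace classifiers on `ℝ`: `sign(w x + b)`, with `+1` encoded as `true` and `−1`
(sign of nonpositive values) as `false`. -/
noncomputable def halfspaces : Set (ℝ → Bool) :=
  {h | ∃ w b : ℝ, h = fun x => decide (0 < w * x + b)}

/-- Corruption by the `ε`-interval adversary: `some true` if `h ≡ +1` on `N x`,
`some false` if `h ≡ −1` on `N x`, `none` (`⊥`) otherwise. -/
noncomputable def corrupt {X : Type*} (N : X → Set X) (h : X → Bool) : X → Option Bool :=
  fun x =>
    if ∀ x' ∈ N x, h x' = true then some true
    else if ∀ x' ∈ N x, h x' = false then some false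
    else none

/-- The 0-1 loss on corrupted outputs, `true` meaning loss 1. -/
noncomputable def loss (yt : Option Bool) (y : Bool) : Bool :=
  if yt = some y then false else true

/-- Shattering of `n` labeled points by the corrupted loss class of `H`. -/
def Shatters {X : Type*} (H : Set (X → Bool)) (N : X → Set X) (n : ℕ) : Prop :=
  ∃ pts : Fin n → X × Bool, ∀ v : Fin n → Bool,
    ∃ h ∈ H, ∀ i, loss (corrupt N h (pts i).1) (pts i).2 = v i

/-- Adversarial VC-dimension via the corrupted loss class. -/
noncomputable def AVC {X : Type*} (H : Set (X → Bool)) (N : X → Set X) : ℕ :=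
  sSup {n | Shatters H N n}

-- auxiliary lemmas

lemma corrupt_eq_true' {X : Type*} (N : X → Set X) (h : X → Bool) (x : X)
    (H : ∀ x' ∈ N x, h x' = true) : corrupt N h x = some true := by
  unfold corrupt
  rw [if_pos H]

lemma corrupt_eq_false' {X : Type*} (N : X → Set X) (h : X → Bool) (x : X)
    (hx : x ∈ N x) (H : ∀ x' ∈ N x, h x' = false) : corrupt N h x = some false := by
  have h1 : ¬ ∀ x' ∈ N x, h x' = true := by
    intro H'
    have := H' x hx
    rw [H x hx] at this
    exact Bool.false_ne_true this
  unfold corrupt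
  rw [if_neg h1, if_pos H]

lemma corrupt_cases' {X : Type*} (N : X → Set X) (h : X → Bool) (x : X) (t : Bool)
    (ht : corrupt N h x = some t) :
    (t = true ∧ ∀ x' ∈ N x, h x' = true) ∨ (t = false ∧ ∀ x' ∈ N x, h x' = false) := by
  unfold corrupt at ht
  by_cases h1 : ∀ x' ∈ N x, h x' = true
  · rw [if_pos h1] at ht
    exact Or.inl ⟨(Option.some.inj ht).symm, h1⟩
  · rw [if_neg h1] at ht
    by_cases h2 : ∀ x' ∈ N x, h x' = false
    · rw [if_pos h2] at ht
      exact Or.inr ⟨(Option.some.inj ht).symm, h2⟩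
    · rw [if_neg h2] at ht
      cases ht

lemma loss_eq_false_iff' (yt : Option Bool) (y : Bool) : loss yt y = false ↔ yt = some y := by
  unfold loss
  split_ifs with h <;> simp [h]

lemma loss_some_true (b : Bool) : loss (some b) true = !b := by
  cases b <;> simp [loss]

lemma mem_halfspaces (w b : ℝ) : (fun x => decide (0 < w * x + b)) ∈ halfspaces := by
  unfold halfspaces
  exact ⟨w, b, rfl⟩

lemma hs_mono (h : ℝ → Bool) (hh : h ∈ halfspaces) :
    (∀ x x' : ℝ, x ≤ x' → h x = true → h x' = true) ∨
    (∀ x x' : ℝ, x ≤ x' → h x' = true → h x = true) := by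
  obtain ⟨w, b, rfl⟩ := hh
  rcases le_total 0 w with hw | hw
  · left
    intro x x' hle
    simp only [decide_eq_true_eq]
    intro hx
    nlinarith
  · right
    intro x x' hle
    simp only [decide_eq_true_eq]
    intro hx
    nlinarith

lemma between (ε : ℝ) (hε : 0 ≤ ε) (h : ℝ → Bool) (hh : h ∈ halfspaces)
    (a b c : ℝ) (hab : a ≤ b) (hbc : b ≤ c) (t : Bool)
    (ht : corrupt (fun x => Set.Icc (x - ε) (x + ε)) h b = some t) :
    corrupt (fun x => Set.Icc (x - ε) (x + ε)) h a = some t ∨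
    corrupt (fun x => Set.Icc (x - ε) (x + ε)) h c = some t := by
  rcases corrupt_cases' _ h b t ht with ⟨rfl, H⟩ | ⟨rfl, H⟩ <;>
    rcases hs_mono h hh with up | down
  · -- t = true, monotone up: true on N c
    right
    apply corrupt_eq_true'
    intro x' hx'
    exact up (b - ε) x' (by have := hx'.1; simp at this ⊢; linarith)
      (H (b - ε) ⟨le_rfl, by linarith⟩)
  · -- t = true, monotone down: true on N a
    left
    apply corrupt_eq_true'
    intro x' hx'
    exact down x' (b + ε) (by have := hx'.2; simp at this ⊢; linarith)
      (H (b + ε) ⟨by linarith, le_rfl⟩)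
  · -- t = false, monotone up: false on N a
    left
    refine corrupt_eq_false' (fun x => Set.Icc (x - ε) (x + ε)) h a ⟨by linarith, by linarith⟩ ?_
    intro x' hx'
    by_contra hc
    have hx't : h x' = true := by simpa using hc
    have : h (b + ε) = true := up x' (b + ε) (by have := hx'.2; linarith) hx't
    rw [H (b + ε) ⟨by linarith, le_rfl⟩] at this
    exact Bool.false_ne_true this
  · -- t = false, monotone down: false on N c
    right
    refine corrupt_eq_false' (fun x => Set.Icc (x - ε) (x + ε)) h c ⟨by linarith, by linarith⟩ ?_
    intro x' hx'
    by_contra hc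
    have hx't : h x' = true := by simpa using hc
    have : h (b - ε) = true := down (b - ε) x' (by have := hx'.1; simp at this; linarith) hx't
    rw [H (b - ε) ⟨le_rfl, by linarith⟩] at this
    exact Bool.false_ne_true this

lemma sep (ε a c : ℝ) (hε : 0 ≤ ε) (hd : 2 * ε < |a - c|) :
    ∃ h ∈ halfspaces,
      (∀ x' ∈ Set.Icc (a - ε) (a + ε), h x' = false) ∧
      (∀ x' ∈ Set.Icc (c - ε) (c + ε), h x' = true) := by
  refine ⟨fun x => decide (0 < (c - a) * x + (-(c - a) * ((a + c) / 2))),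
    mem_halfspaces _ _, ?_, ?_⟩
  · intro x' hx'
    obtain ⟨h1, h2⟩ := hx'
    rcases lt_abs.mp hd with hca | hca
    · simp only [decide_eq_false_iff_not, not_lt]
      nlinarith
    · simp only [decide_eq_false_iff_not, not_lt]
      nlinarith
  · intro x' hx'
    obtain ⟨h1, h2⟩ := hx'
    rcases lt_abs.mp hd with hca | hca
    · simp only [decide_eq_true_eq]
      nlinarith
    · simp only [decide_eq_true_eq]
      nlinarith

lemma two_point (ε : ℝ) (hε : 0 ≤ ε) (x₁ x₂ : ℝ) (hd : |x₁ - x₂| > 2 * ε)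
    (v₁ v₂ : Bool) :
    ∃ h ∈ halfspaces,
      loss (corrupt (fun x => Set.Icc (x - ε) (x + ε)) h x₁) true = v₁ ∧
      loss (corrupt (fun x => Set.Icc (x - ε) (x + ε)) h x₂) true = v₂ := by
  have hmem : ∀ x : ℝ, x ∈ Set.Icc (x - ε) (x + ε) := fun x => ⟨by linarith, by linarith⟩
  cases v₁ <;> cases v₂
  · -- false false: constant true
    refine ⟨fun x => decide ((0:ℝ) < 0 * x + 1), mem_halfspaces 0 1, ?_, ?_⟩ <;>
      · rw [corrupt_eq_true' (fun x => Set.Icc (x - ε) (x + ε)) _ _ (by intro x' _; norm_num)]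
        simp [loss]
  · -- false true
    obtain ⟨h, hH, hf, htr⟩ := sep ε x₂ x₁ hε (by rwa [abs_sub_comm])
    exact ⟨h, hH, by rw [corrupt_eq_true' (fun x => Set.Icc (x - ε) (x + ε)) h x₁ htr, loss_some_true]; rfl,
      by rw [corrupt_eq_false' (fun x => Set.Icc (x - ε) (x + ε)) h x₂ (hmem x₂) hf, loss_some_true]; rfl⟩
  · -- true false
    obtain ⟨h, hH, hf, htr⟩ := sep ε x₁ x₂ hε hd
    exact ⟨h, hH, by rw [corrupt_eq_false' (fun x => Set.Icc (x - ε) (x + ε)) h x₁ (hmem x₁) hf, loss_some_true]; rfl,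
      by rw [corrupt_eq_true' (fun x => Set.Icc (x - ε) (x + ε)) h x₂ htr, loss_some_true]; rfl⟩
  · -- true true: constant false
    refine ⟨fun x => decide ((0:ℝ) < 0 * x + 0), mem_halfspaces 0 0, ?_, ?_⟩ <;>
      · rw [corrupt_eq_false' (fun x => Set.Icc (x - ε) (x + ε)) _ _ (hmem _) (by intro x' _; norm_num)]
        simp [loss]

lemma sorted3 (x : Fin 3 → ℝ) :
    ∃ i j k : Fin 3, i ≠ j ∧ j ≠ k ∧ x i ≤ x j ∧ x j ≤ x k := by
  rcases le_total (x 0) (x 1) with h01 | h01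
  · rcases le_total (x 1) (x 2) with h12 | h12
    · exact ⟨0, 1, 2, by decide, by decide, h01, h12⟩
    · rcases le_total (x 0) (x 2) with h02 | h02
      · exact ⟨0, 2, 1, by decide, by decide, h02, h12⟩
      · exact ⟨2, 0, 1, by decide, by decide, h02, h01⟩
  · rcases le_total (x 0) (x 2) with h02 | h02
    · exact ⟨1, 0, 2, by decide, by decide, h01, h02⟩
    · rcases le_total (x 1) (x 2) with h12 | h12
      · exact ⟨1, 2, 0, by decide, by decide, h12, h02⟩
      · exact ⟨2, 1, 0, by decide, by decide, h12, h01⟩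

lemma not_shatters_three (ε : ℝ) (hε : 0 ≤ ε) :
    ¬ Shatters halfspaces (fun x => Set.Icc (x - ε) (x + ε)) 3 := by
  rintro ⟨pts, hpts⟩
  obtain ⟨i, j, k, hij, hjk, hxij, hxjk⟩ := sorted3 (fun l => (pts l).1)
  set y : Fin 3 → Bool := fun l => (pts l).2 with hy
  obtain ⟨h, hH, hl⟩ := hpts (fun l => if l = j then false else decide (y l = y j))
  have hj := hl j
  rw [if_pos rfl, loss_eq_false_iff'] at hj
  have hb := between ε hε h hH _ _ _ hxij hxjk (y j) hj
  rcases hb with hc | hc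
  · have hi := hl i
    rw [if_neg hij, hc] at hi
    by_cases hyy : y i = y j
    · simp [loss, hyy] at hi
      exact hi hyy.symm
    · simp [loss, hyy, Ne.symm hyy] at hi
      exact hyy hi.symm
  · have hk := hl k
    rw [if_neg (Ne.symm hjk), hc] at hk
    by_cases hyy : y k = y j
    · simp [loss, hyy] at hk
      exact hk hyy.symm
    · simp [loss, hyy, Ne.symm hyy] at hk
      exact hyy hk.symm

lemma shatters_mono {X : Type*} (H : Set (X → Bool)) (N : X → Set X) {m n : ℕ} (hmn : m ≤ n)
    (hs : Shatters H N n) : Shatters H N m := by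
  obtain ⟨pts, hp⟩ := hs
  refine ⟨fun i => pts (Fin.castLE hmn i), fun v => ?_⟩
  obtain ⟨h, hH, hl⟩ := hp (fun i => if h : (i : ℕ) < m then v ⟨i, h⟩ else false)
  refine ⟨h, hH, fun i => ?_⟩
  have := hl (Fin.castLE hmn i)
  simpa [Fin.castLE] using this

/-- Halfspaces on `ℝ` against the `ε`-interval adversary: any two points at distance
greater than `2ε` are shattered (via the corrupted loss class), so the adversarial
VC-dimension is at least `2 = d + 1` for `d = 1`. -/
theorem halfspace_avc_ge_two (ε : ℝ) (hε : 0 ≤ ε) :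
    (∀ x₁ x₂ : ℝ, |x₁ - x₂| > 2 * ε →
      ∃ y₁ y₂ : Bool, ∀ v₁ v₂ : Bool,
        ∃ h ∈ halfspaces,
          loss (corrupt (fun x => Set.Icc (x - ε) (x + ε)) h x₁) y₁ = v₁ ∧
          loss (corrupt (fun x => Set.Icc (x - ε) (x + ε)) h x₂) y₂ = v₂) ∧
    2 ≤ AVC halfspaces (fun x => Set.Icc (x - ε) (x + ε)) := by
  constructor
  · intro x₁ x₂ hd
    exact ⟨true, true, fun v₁ v₂ => two_point ε hε x₁ x₂ hd v₁ v₂⟩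
  · have h2 : Shatters halfspaces (fun x => Set.Icc (x - ε) (x + ε)) 2 := by
      refine ⟨fun i => (if i = 0 then 0 else 2 * ε + 1, true), fun v => ?_⟩
      obtain ⟨h, hH, h1, h2⟩ := two_point ε hε 0 (2 * ε + 1)
        (by rw [zero_sub, abs_neg, abs_of_nonneg (by linarith)]; linarith) (v 0) (v 1)
      refine ⟨h, hH, fun i => ?_⟩
      fin_cases i
      · simpa using h1
      · simpa using h2
    have hbdd : BddAbove {n | Shatters halfspaces (fun x => Set.Icc (x - ε) (x + ε)) n} := by
      refine ⟨2, fun n hn => ?_⟩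
      by_contra hlt
      push_neg at hlt
      exact not_shatters_three ε hε (shatters_mono _ _ hlt hn)
    exact le_csSup hbdd h2
end

section
/- Let H^(t,i) for t = 1,…,T and i = 1,…,|V_t| be function classes each of VC-dimension at most d_{t,i}, and let H be the layered composition of Cartesian products as in a feedforward sign-activation network. If m > (2|E|/log 2)·log(e|E|/log 2) where |E| = Σ_{t,i} d_{t,i} ≥ 1, then H cannot shatter any set of size m. -/
open Real

universe u

def compClass (X : ℕ → Type u) (H : ∀ t, Set (X t → X (t + 1))) : ∀ T, Set (X 0 → X T)
  | 0 => {id}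
  | T + 1 => {g | ∃ f ∈ compClass X H T, ∃ h ∈ H T, g = h ∘ f}

/-- The signal spaces of a sign-activation network: the input space `D`, and for layer
`t + 1` a vector of `V (t+1)` binary outputs, one per neuron. -/
def NetX (D : Type) (V : ℕ → ℕ) : ℕ → Type
  | 0 => D
  | t + 1 => Fin (V (t + 1)) → Bool

/-- The hypothesis class of layer `t`: the Cartesian product of the per-neuron
classes `H t i`. -/
def layerClass (D : Type) (V : ℕ → ℕ)
    (H : ∀ t : ℕ, Fin (V (t + 1)) → Set (NetX D V t → Bool)) (t : ℕ) :
    Set (NetX D V t → NetX D V (t + 1)) :=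
  {g | ∃ f : Fin (V (t + 1)) → (NetX D V t → Bool),
    (∀ i, f i ∈ H t i) ∧ g = fun x i => f i x}

lemma netX_succ_eq (D : Type) (V : ℕ → ℕ) (t : ℕ) :
    NetX D V (t + 1) = (Fin (V (t + 1)) → Bool) := rfl

lemma sum_pow_le_succ_pow (m d : ℕ) : ∑ k ∈ Finset.range (d+1), m ^ k ≤ (m+1) ^ d := by
  induction d with
  | zero => simp
  | succ d ih =>
    rw [Finset.sum_range_succ', pow_succ]
    simp only [pow_succ, pow_zero]
    calc (∑ k ∈ Finset.range (d+1), m ^ k * m) + 1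
        = m * (∑ k ∈ Finset.range (d+1), m ^ k) + 1 := by
          rw [Finset.mul_sum]; congr 1; apply Finset.sum_congr rfl; intros; ring
      _ ≤ m * (m+1)^d + 1 := by
          have := Nat.mul_le_mul_left m ih; omega
      _ ≤ (m+1)^d * (m+1) := by
          have h1 : 1 ≤ (m+1)^d := Nat.one_le_pow _ _ (by omega)
          nlinarith
lemma card_small_sets (m d : ℕ) :
    ((Finset.univ : Finset (Finset (Fin m))).filter (fun s => s.card ≤ d)).card
      ≤ (m+1) ^ d := by
  classical
  have hsub : ((Finset.univ : Finset (Finset (Fin m))).filter (fun s => s.card ≤ d))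
      ⊆ (Finset.range (d+1)).biUnion (fun k => Finset.powersetCard k Finset.univ) := by
    intro s hs
    simp only [Finset.mem_filter, Finset.mem_univ, true_and] at hs
    simp only [Finset.mem_biUnion, Finset.mem_range, Finset.mem_powersetCard]
    exact ⟨s.card, by omega, s.subset_univ, rfl⟩
  calc _ ≤ ((Finset.range (d+1)).biUnion (fun k => Finset.powersetCard k Finset.univ)).card :=
        Finset.card_le_card hsub
    _ ≤ ∑ k ∈ Finset.range (d+1), (Finset.powersetCard k (Finset.univ : Finset (Fin m))).card :=
        Finset.card_biUnion_le
    _ = ∑ k ∈ Finset.range (d+1), m.choose k := by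
        apply Finset.sum_congr rfl; intro k _
        rw [Finset.card_powersetCard, Finset.card_univ, Fintype.card_fin]
    _ ≤ ∑ k ∈ Finset.range (d+1), m ^ k := by
        apply Finset.sum_le_sum; intro k _; exact Nat.choose_le_pow m k
    _ ≤ (m+1) ^ d := sum_pow_le_succ_pow m d

lemma sauer_count {X : Type*} (F : Set (X → Bool)) (d : ℕ)
    (hVC : ∀ k : ℕ, (∃ pts : Fin k → X, ∀ v : Fin k → Bool,
        ∃ f ∈ F, ∀ j, f (pts j) = v j) → k ≤ d)
    (m : ℕ) (q : Fin m → X) :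
    ∃ R : Finset (Fin m → Bool),
      (∀ f ∈ F, (fun j => f (q j)) ∈ R) ∧ R.card ≤ (m + 1) ^ d := by
  classical
  set Rset : Set (Fin m → Bool) := {v | ∃ f ∈ F, v = fun j => f (q j)} with hRset
  refine ⟨(Set.toFinite Rset).toFinset, ?_, ?_⟩
  · intro f hf
    simp only [Set.Finite.mem_toFinset, hRset, Set.mem_setOf_eq]
    exact ⟨f, hf, rfl⟩
  · set R := (Set.toFinite Rset).toFinset with hR
    set 𝒜 : Finset (Finset (Fin m)) :=
      R.image (fun v => Finset.univ.filter (fun j => v j = true)) with h𝒜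
    have hcard : R.card = 𝒜.card := by
      rw [h𝒜, Finset.card_image_of_injOn]
      intro v _ v' _ hvv'
      funext j
      have : (j ∈ Finset.univ.filter (fun j => v j = true))
          ↔ (j ∈ Finset.univ.filter (fun j => v' j = true)) := by
        simp only at hvv'; rw [hvv']
      simp only [Finset.mem_filter, Finset.mem_univ, true_and] at this
      cases hv : v j <;> cases hv' : v' j <;> simp_all
    have hshat : 𝒜.shatterer ⊆
        (Finset.univ : Finset (Finset (Fin m))).filter (fun s => s.card ≤ d) := by
      intro s hs
      rw [Finset.mem_shatterer] at hs
      simp only [Finset.mem_filter, Finset.mem_univ, true_and]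
      set n := s.card with hn
      set e := s.orderIsoOfFin hn.symm with he
      apply hVC n
      refine ⟨fun j => q (e j : Fin m), ?_⟩
      intro v
      set t : Finset (Fin m) :=
        (Finset.univ.filter (fun j : Fin n => v j = true)).image (fun j => (e j : Fin m)) with ht
      have hts : t ⊆ s := by
        intro x hx
        simp only [ht, Finset.mem_image] at hx
        obtain ⟨j, _, rfl⟩ := hx
        exact (e j).2
      obtain ⟨u, hu, hsu⟩ := hs hts
      simp only [h𝒜, Finset.mem_image] at hu
      obtain ⟨v0, hv0R, rfl⟩ := hu
      have hv0 : v0 ∈ Rset := by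
        rw [hR] at hv0R; exact (Set.Finite.mem_toFinset _).mp hv0R
      obtain ⟨f, hfF, rfl⟩ := hv0
      refine ⟨f, hfF, ?_⟩
      intro j
      have hmem : ((e j : Fin m) ∈ t) ↔ v j = true := by
        simp only [ht, Finset.mem_image, Finset.mem_filter, Finset.mem_univ, true_and]
        constructor
        · rintro ⟨j', hj', hjj'⟩
          have : e j' = e j := Subtype.ext hjj'
          have : j' = j := e.injective this
          subst this; exact hj'
        · intro h; exact ⟨j, h, rfl⟩
      have hmem2 : ((e j : Fin m) ∈ s ∩ (Finset.univ.filter (fun j0 => f (q j0) = true)))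
          ↔ v j = true := by rw [hsu]; exact hmem
      simp only [Finset.mem_inter, Finset.mem_filter, Finset.mem_univ, true_and] at hmem2
      have hes : (e j : Fin m) ∈ s := (e j).2
      cases hv : v j
      · cases hf : f (q (e j : Fin m))
        · rfl
        · exfalso; have := hmem2.mp ⟨hes, hf⟩; simp [hv] at this
      · exact (hmem2.mpr hv).2
    calc R.card = 𝒜.card := hcard
      _ ≤ 𝒜.shatterer.card := Finset.card_le_card_shatterer 𝒜
      _ ≤ _ := Finset.card_le_card hshat
      _ ≤ (m+1)^d := card_small_sets m d


lemma numeric_main (E m : ℕ) (hE : 1 ≤ E)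
    (hm : (m : ℝ) > 2 * E / Real.log 2 * Real.log (Real.exp 1 * E / Real.log 2)) :
    (m + 1) ^ E < 2 ^ m := by
  have hl2 : (0:ℝ) < Real.log 2 := Real.log_pos (by norm_num)
  have hl2' : Real.log 2 < 1 := by
    have := Real.log_lt_sub_one_of_pos (x := 2) (by norm_num) (by norm_num)
    linarith
  have hE' : (1:ℝ) ≤ (E:ℝ) := by exact_mod_cast hE
  have hEpos : (0:ℝ) < E := by linarith
  -- m ≥ 1
  have hrhs : (0:ℝ) < 2 * E / Real.log 2 * Real.log (Real.exp 1 * E / Real.log 2) := by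
    apply mul_pos (by positivity)
    apply Real.log_pos
    have h1 : (1:ℝ) < E / Real.log 2 := by
      rw [lt_div_iff₀ hl2]; nlinarith
    have he : (1:ℝ) < Real.exp 1 := by
      have := Real.exp_one_gt_d9; linarith
    calc (1:ℝ) < E / Real.log 2 := h1
      _ = 1 * (E / Real.log 2) := by ring
      _ < Real.exp 1 * (E / Real.log 2) := by
          apply mul_lt_mul_of_pos_right he; linarith
      _ = Real.exp 1 * E / Real.log 2 := by ring
  have hm0 : (0:ℝ) < m := lt_trans hrhs hm
  have hm1 : 1 ≤ m := by exact_mod_cast hm0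
  have hm1' : (1:ℝ) ≤ (m:ℝ) := by exact_mod_cast hm1
  -- key log inequality
  have key : (E:ℝ) * Real.log (m + 1) < m * Real.log 2 := by
    have hlem : Real.log ((m:ℝ) + 1) ≤ 1 + Real.log m := by
      have h2 : (m:ℝ) + 1 ≤ Real.exp 1 * m := by
        have : (2:ℝ) ≤ Real.exp 1 := by
          have := Real.exp_one_gt_d9; linarith
        nlinarith
      calc Real.log ((m:ℝ)+1) ≤ Real.log (Real.exp 1 * m) :=
            Real.log_le_log (by positivity) h2
        _ = 1 + Real.log m := by
            rw [Real.log_mul (by positivity) (by positivity), Real.log_exp]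
    -- bound log m
    have hx : (0:ℝ) < (m:ℝ) * Real.log 2 / (2 * E) := by positivity
    have hsplit : Real.log (m:ℝ) =
        Real.log ((m:ℝ) * Real.log 2 / (2 * E)) + Real.log (2 * E / Real.log 2) := by
      rw [← Real.log_mul (ne_of_gt hx) (by positivity)]
      congr 1
      field_simp
    have hlogm : Real.log (m:ℝ) ≤ (m:ℝ) * Real.log 2 / (2 * E) - 1
        + Real.log (2 * E / Real.log 2) := by
      rw [hsplit]
      have := Real.log_le_sub_one_of_pos hx
      linarith
    -- hypothesis rewritten
    have hhyp : (m:ℝ) * Real.log 2 > 2 * E * (1 + Real.log (E / Real.log 2)) := by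
      have h1 : Real.log (Real.exp 1 * E / Real.log 2)
          = 1 + Real.log (E / Real.log 2) := by
        rw [mul_div_assoc, Real.log_mul (by positivity) (by positivity), Real.log_exp]
      have h2 : (m:ℝ) * Real.log 2 > 2 * E * Real.log (Real.exp 1 * E / Real.log 2) := by
        have h3 := mul_lt_mul_of_pos_right hm hl2
        calc 2 * E * Real.log (Real.exp 1 * E / Real.log 2)
            = 2 * E / Real.log 2 * Real.log (Real.exp 1 * E / Real.log 2) * Real.log 2 := by
              field_simp
          _ < m * Real.log 2 := h3
      rw [h1] at h2; exact h2
    have hlog2E : Real.log (2 * E / Real.log 2)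
        = Real.log 2 + Real.log (E / Real.log 2) := by
      rw [mul_div_assoc, Real.log_mul (by norm_num) (by positivity)]
    -- combine
    have hEl : (E:ℝ) * Real.log m ≤ (m:ℝ) * Real.log 2 / 2 - E
        + E * (Real.log 2 + Real.log (E / Real.log 2)) := by
      have := mul_le_mul_of_nonneg_left hlogm (le_of_lt hEpos)
      rw [hlog2E] at this
      calc (E:ℝ) * Real.log m ≤ E * ((m:ℝ) * Real.log 2 / (2*E) - 1
            + (Real.log 2 + Real.log (E / Real.log 2))) := this
        _ = (m:ℝ) * Real.log 2 / 2 - E + E * (Real.log 2 + Real.log (E / Real.log 2)) := by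
            field_simp
    have hEll : (E:ℝ) * Real.log (E / Real.log 2) < (m:ℝ) * Real.log 2 / 2 - E := by
      nlinarith
    calc (E:ℝ) * Real.log (m+1) ≤ E * (1 + Real.log m) := by
          nlinarith [hlem]
      _ = E + E * Real.log m := by ring
      _ ≤ E + ((m:ℝ) * Real.log 2 / 2 - E + E * Real.log 2 + E * Real.log (E / Real.log 2)) := by
          nlinarith [hEl]
      _ < E + ((m:ℝ) * Real.log 2 / 2 - E + E * Real.log 2 + ((m:ℝ) * Real.log 2 / 2 - E)) := by
          linarith
      _ = (m:ℝ) * Real.log 2 + E * (Real.log 2 - 1) := by ring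
      _ < (m:ℝ) * Real.log 2 := by nlinarith
  -- exponentiate
  have hcast : ((m:ℝ) + 1) ^ E < (2:ℝ) ^ m := by
    have h1 : Real.log (((m:ℝ) + 1) ^ E) < Real.log ((2:ℝ) ^ m) := by
      rw [Real.log_pow, Real.log_pow]; push_cast; exact key
    have hp1 : (0:ℝ) < ((m:ℝ) + 1) ^ E := by positivity
    have hp2 : (0:ℝ) < (2:ℝ) ^ m := by positivity
    exact (Real.log_lt_log_iff hp1 hp2).mp h1
  have : (((m+1) ^ E : ℕ) : ℝ) < ((2 ^ m : ℕ) : ℝ) := by push_cast; exact hcast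
  exact_mod_cast this

lemma layer_count (D : Type) (V : ℕ → ℕ)
    (H : ∀ t : ℕ, Fin (V (t + 1)) → Set (NetX D V t → Bool))
    (d : ∀ t : ℕ, Fin (V (t + 1)) → ℕ) (t : ℕ)
    (hVC : ∀ i : Fin (V (t + 1)), ∀ k : ℕ,
      (∃ pts : Fin k → NetX D V t, ∀ v : Fin k → Bool,
        ∃ f ∈ H t i, ∀ j, f (pts j) = v j) → k ≤ d t i)
    (m : ℕ) (q : Fin m → NetX D V t) :
    ∃ L : Finset (Fin m → NetX D V (t + 1)),
      (∀ g ∈ layerClass D V H t, (fun j => g (q j)) ∈ L) ∧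
      L.card ≤ ∏ i, (m + 1) ^ (d t i) := by
  classical
  have hsauer := fun i : Fin (V (t + 1)) => sauer_count (H t i) (d t i) (hVC i) m q
  choose R hR1 hR2 using hsauer
  refine ⟨(Fintype.piFinset R).image
    (fun F => (fun j => (fun i => F i j : NetX D V (t + 1)))), ?_, ?_⟩
  · intro g hg
    obtain ⟨f, hf, rfl⟩ := hg
    refine Finset.mem_image.mpr ?_
    refine ⟨fun i j => f i (q j), ?_, rfl⟩
    rw [Fintype.mem_piFinset]
    intro i
    exact hR1 i (f i) (hf i)
  · calc _ ≤ (Fintype.piFinset R).card := Finset.card_image_le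
      _ = ∏ i, (R i).card := Fintype.card_piFinset R
      _ ≤ ∏ i, (m + 1) ^ (d t i) := Finset.prod_le_prod' (fun i _ => hR2 i)

lemma comp_count (D : Type) (V : ℕ → ℕ)
    (H : ∀ t : ℕ, Fin (V (t + 1)) → Set (NetX D V t → Bool))
    (d : ∀ t : ℕ, Fin (V (t + 1)) → ℕ)
    (hVC : ∀ t, ∀ i : Fin (V (t + 1)), ∀ k : ℕ,
      (∃ pts : Fin k → NetX D V t, ∀ v : Fin k → Bool,
        ∃ f ∈ H t i, ∀ j, f (pts j) = v j) → k ≤ d t i)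
    (m : ℕ) (pts : Fin m → D) :
    ∀ T' : ℕ, ∃ A : Finset (Fin m → NetX D V T'),
      (∀ g ∈ compClass (NetX D V) (layerClass D V H) T', (fun j => g (pts j)) ∈ A) ∧
      A.card ≤ ∏ t ∈ Finset.range T', ∏ i, (m + 1) ^ (d t i) := by
  classical
  intro T'
  induction T' with
  | zero =>
    refine ⟨{fun j => pts j}, ?_, by simp only [Finset.prod_range_zero]; exact (Finset.card_singleton _).le⟩
    intro g hg
    have : g = id := hg
    subst this
    exact Finset.mem_singleton_self _
  | succ T' ih =>
    obtain ⟨A, hA1, hA2⟩ := ih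
    have hlayer := fun qv : Fin m → NetX D V T' =>
      layer_count D V H d T' (hVC T') m qv
    choose L hL1 hL2 using hlayer
    refine ⟨A.biUnion L, ?_, ?_⟩
    · intro g hg
      obtain ⟨f, hf, h, hh, rfl⟩ := hg
      rw [Finset.mem_biUnion]
      exact ⟨fun j => f (pts j), hA1 f hf, hL1 _ h hh⟩
    · calc (A.biUnion L).card ≤ ∑ qv ∈ A, (L qv).card := Finset.card_biUnion_le
        _ ≤ ∑ _qv ∈ A, ∏ i, (m + 1) ^ (d T' i) := Finset.sum_le_sum (fun qv _ => hL2 qv)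
        _ = A.card * ∏ i, (m + 1) ^ (d T' i) := by rw [Finset.sum_const, smul_eq_mul]
        _ ≤ (∏ t ∈ Finset.range T', ∏ i, (m + 1) ^ (d t i)) * ∏ i, (m + 1) ^ (d T' i) :=
            Nat.mul_le_mul_right _ hA2
        _ = ∏ t ∈ Finset.range (T' + 1), ∏ i, (m + 1) ^ (d t i) :=
            (Finset.prod_range_succ _ _).symm


/-- If every neuron class `H t i` has VC-dimension at most `d t i`, then the layered
network class (with `T + 1` layers) cannot shatter any set of size
`m > (2 |E| / log 2) · log (e |E| / log 2)`, where `|E| = Σ_t Σ_i d_{t,i} ≥ 1`. -/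
theorem network_no_shatter (D : Type) (V : ℕ → ℕ) (T : ℕ)
    (H : ∀ t : ℕ, Fin (V (t + 1)) → Set (NetX D V t → Bool))
    (d : ∀ t : ℕ, Fin (V (t + 1)) → ℕ)
    (hVC : ∀ t, ∀ i : Fin (V (t + 1)), ∀ k : ℕ,
      (∃ pts : Fin k → NetX D V t, ∀ v : Fin k → Bool,
        ∃ f ∈ H t i, ∀ j, f (pts j) = v j) → k ≤ d t i)
    (hE : 1 ≤ ∑ t ∈ Finset.range (T + 1), ∑ i, d t i)
    (m : ℕ)
    (hm : (m : ℝ) > (2 * (∑ t ∈ Finset.range (T + 1), ∑ i, d t i) / Real.log 2) *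
      Real.log (Real.exp 1 * (∑ t ∈ Finset.range (T + 1), ∑ i, d t i) / Real.log 2)) :
    ∀ out : Fin (V (T + 1)),
      ¬ ∃ pts : Fin m → D, Function.Injective pts ∧
        ∀ v : Fin m → Bool,
          ∃ g ∈ compClass (NetX D V) (layerClass D V H) (T + 1),
            ∀ j, g (pts j) out = v j := by
  classical
  set E := ∑ t ∈ Finset.range (T + 1), ∑ i, d t i with hEdef
  intro out ⟨pts, _hinj, hshat⟩
  obtain ⟨A, hA1, hA2⟩ := comp_count D V H d hVC m pts (T + 1)
  have hprod : (∏ t ∈ Finset.range (T + 1), ∏ i, (m + 1) ^ (d t i)) = (m + 1) ^ E := by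
    rw [hEdef]
    rw [← Finset.prod_pow_eq_pow_sum]
    apply Finset.prod_congr rfl
    intro t _
    rw [← Finset.prod_pow_eq_pow_sum]
  choose g hg1 hg2 using hshat
  have hcard : (2 : ℕ) ^ m ≤ A.card := by
    have hinjOn : Set.InjOn (fun v => (fun j => g v (pts j)))
        ((Finset.univ : Finset (Fin m → Bool)) : Set (Fin m → Bool)) := by
      intro v _ v' _ hvv'
      funext j
      have h1 : g v (pts j) out = v j := hg2 v j
      have h2 : g v' (pts j) out = v' j := hg2 v' j
      have : g v (pts j) = g v' (pts j) := congrFun hvv' j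
      rw [← h1, ← h2, this]
    have := Finset.card_le_card_of_injOn (fun v => (fun j => g v (pts j)))
      (fun v _ => hA1 (g v) (hg1 v)) hinjOn
    simpa using this
  have hlt : ((m + 1) : ℕ) ^ E < 2 ^ m := numeric_main E m hE (by exact_mod_cast hm)
  rw [hprod] at hA2
  omega
end
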